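/- Let p ≥ 1, b > 0, and let α > 0 and β, γ ∈ ℝ satisfy α + β + γ = 0 and (γ+1)p > 1. Then the operator f ↦ (x ↦ x^β · (I^α_{0+}(y ↦ y^γ f(y)))(x)) is bounded on L^p([0,b]): there exists C > 0 such that for every f ∈ L^p([0,b]) the resulting function lies in L^p([0,b]) with norm at most C times the L^p norm of f. -/

import Mathlib

open MeasureTheory Set

noncomputable section

/-- Left-sided Riemann–Liouville fractional integral
`(I^α_{0+}f)(x) = (1/Γ(α)) ∫_0^x (x-y)^{α-1} f(y) dy`. -/
def Iplus (α : ℝ) (f : ℝ → ℝ) (x : ℝ) : ℝ :=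
  (1 / Real.Gamma α) * ∫ y in Ioo (0 : ℝ) x, (x - y) ^ (α - 1) * f y

open ENNReal in
private lemma lintegral_image1d {s : Set ℝ} {f f' : ℝ → ℝ} (hs : MeasurableSet s)
    (hf' : ∀ x ∈ s, HasDerivWithinAt f (f' x) s x) (hf : Set.InjOn f s) (g : ℝ → ℝ≥0∞) :
    ∫⁻ x in f '' s, g x = ∫⁻ x in s, ENNReal.ofReal |f' x| * g (f x) := by
  simpa only [ContinuousLinearMap.det_toSpanSingleton] using
    MeasureTheory.lintegral_image_eq_lintegral_abs_det_fderiv_mul volume hs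
      (fun x hx => (hf' x hx).hasFDerivWithinAt) hf g

private lemma lint_ofReal_lt_top {h : ℝ → ℝ} {s : Set ℝ} (hi : IntegrableOn h s) :
    ∫⁻ t in s, ENNReal.ofReal (h t) < ⊤ := by
  refine lt_of_le_of_lt (lintegral_mono (fun t => ?_)) hi.2
  rw [Real.enorm_eq_ofReal_abs]
  exact ENNReal.ofReal_le_ofReal (le_abs_self _)

private lemma beta_lt_top {a c : ℝ} (ha : 0 < a) (hc : -1 < c) :
    ∫⁻ t in Set.Ioo (0:ℝ) 1, ENNReal.ofReal ((1 - t) ^ (a - 1) * t ^ c) < ⊤ := by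
  have hsub : Set.Ioo (0:ℝ) 1 ⊆ Set.Ioc (0:ℝ) 2⁻¹ ∪ Set.Ioc 2⁻¹ 1 := by
    intro t ht; rcases le_or_gt t 2⁻¹ with h | h
    · exact Or.inl ⟨ht.1, h⟩
    · exact Or.inr ⟨h, ht.2.le⟩
  refine lt_of_le_of_lt (lintegral_mono_set hsub) ?_
  refine lt_of_le_of_lt (lintegral_union_le _ _ _) ?_
  have h1 : ∫⁻ t in Set.Ioc (0:ℝ) 2⁻¹, ENNReal.ofReal ((1 - t) ^ (a - 1) * t ^ c) < ⊤ := by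
    refine lt_of_le_of_lt (setLIntegral_mono' measurableSet_Ioc
      (fun t ht => ENNReal.ofReal_le_ofReal ?_)) (lint_ofReal_lt_top (h := fun t =>
        (max 1 (2⁻¹ ^ (a - 1))) * t ^ c) ?_)
    · have htpos : (0:ℝ) < t := ht.1
      have h1t : (0:ℝ) ≤ 1 - t := by
        have := ht.2; norm_num at this ⊢; linarith
      refine mul_le_mul_of_nonneg_right ?_ (Real.rpow_nonneg htpos.le c)
      rcases le_or_gt 0 (a - 1) with hae | hae
      · exact le_trans (Real.rpow_le_one h1t (by linarith [ht.1]) hae) (le_max_left _ _)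
      · refine le_trans (Real.rpow_le_rpow_of_nonpos (by norm_num) ?_ hae.le) (le_max_right _ _)
        have := ht.2; linarith
    · exact ((intervalIntegrable_iff_integrableOn_Ioc_of_le (by norm_num)).mp
        (intervalIntegral.intervalIntegrable_rpow' hc)).const_mul _
  have h2 : ∫⁻ t in Set.Ioc (2⁻¹:ℝ) 1, ENNReal.ofReal ((1 - t) ^ (a - 1) * t ^ c) < ⊤ := by
    refine lt_of_le_of_lt (setLIntegral_mono' measurableSet_Ioc
      (fun t ht => ENNReal.ofReal_le_ofReal ?_)) (lint_ofReal_lt_top (h := fun t =>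
        (max 1 (2⁻¹ ^ c)) * (1 - t) ^ (a - 1)) ?_)
    · have htpos : (0:ℝ) < t := lt_trans (by norm_num) ht.1
      have h1t : (0:ℝ) ≤ 1 - t := by linarith [ht.2]
      rw [mul_comm]
      refine mul_le_mul_of_nonneg_right ?_ (Real.rpow_nonneg h1t _)
      rcases le_or_gt 0 c with hce | hce
      · exact le_trans (Real.rpow_le_one htpos.le ht.2 hce) (le_max_left _ _)
      · exact le_trans (Real.rpow_le_rpow_of_nonpos (by norm_num) ht.1.le hce.le)
          (le_max_right _ _)
    · have hbase : IntegrableOn (fun t : ℝ => (1 - t) ^ (a - 1)) (Set.Ioc (2⁻¹:ℝ) 1) := by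
        have h0 : IntervalIntegrable (fun t : ℝ => t ^ (a - 1)) volume 0 2⁻¹ :=
          intervalIntegral.intervalIntegrable_rpow' (by linarith)
        have h1 := (h0.comp_sub_left 1).symm
        norm_num at h1
        rw [show (2⁻¹:ℝ) = 1/2 by norm_num]
        exact (intervalIntegrable_iff_integrableOn_Ioc_of_le (by norm_num)).mp h1
      exact hbase.const_mul _
  exact ENNReal.add_lt_top.mpr ⟨h1, h2⟩

open ENNReal in
private lemma schur_one {α β γ p : ℝ} (hα : 0 < α) (hsum : α + β + γ = 0) (hp0 : 0 < p)
    {x : ℝ} (hx : 0 < x) :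
    ∫⁻ y, (Set.Ioo (0:ℝ) x).indicator
        (fun y => ENNReal.ofReal ((x - y) ^ (α-1) * (x ^ β * y ^ γ))) y
        * (ENNReal.ofReal y) ^ (-(1/p))
      = (∫⁻ t in Set.Ioo (0:ℝ) 1, ENNReal.ofReal ((1-t)^(α-1) * t^(γ - 1/p)))
        * (ENNReal.ofReal x) ^ (-(1/p)) := by
  have step1 : ∀ y, (Set.Ioo (0:ℝ) x).indicator
        (fun y => ENNReal.ofReal ((x - y) ^ (α-1) * (x ^ β * y ^ γ))) y
        * (ENNReal.ofReal y) ^ (-(1/p))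
      = (Set.Ioo (0:ℝ) x).indicator
        (fun y => ENNReal.ofReal ((x - y) ^ (α-1) * (x ^ β * y ^ γ))
          * (ENNReal.ofReal y) ^ (-(1/p))) y := by
    intro y; by_cases h : y ∈ Set.Ioo (0:ℝ) x <;> simp [h]
  simp only [step1]
  rw [lintegral_indicator measurableSet_Ioo]
  rw [setLIntegral_congr_fun_ae measurableSet_Ioo (ae_of_all _
    (fun y (hy : y ∈ Set.Ioo (0:ℝ) x) => show _ = ENNReal.ofReal (x ^ β)
        * ENNReal.ofReal ((x - y)^(α-1) * y^(γ - 1/p)) from by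
      have hxy : (0:ℝ) < x - y := by have := hy.2; linarith
      have hy0 : (0:ℝ) < y := hy.1
      rw [ENNReal.ofReal_rpow_of_pos hy.1 (p := -(1/p)),
        ← ENNReal.ofReal_mul (by positivity),
        ← ENNReal.ofReal_mul (by positivity)]
      congr 1
      rw [show γ - 1/p = γ + (-(1/p)) by ring, Real.rpow_add hy.1]
      ring))]
  rw [lintegral_const_mul' _ _ ENNReal.ofReal_ne_top]
  have himg : (fun t => x * t) '' Set.Ioo (0:ℝ) 1 = Set.Ioo (0:ℝ) x := by
    rw [image_mul_left_Ioo hx, mul_zero, mul_one]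
  rw [← himg, lintegral_image1d (f := fun t => x * t) (f' := fun _ => x) measurableSet_Ioo
    (fun t _ => by simpa using ((hasDerivAt_id t).const_mul x).hasDerivWithinAt)
    (fun s _ t _ h => mul_left_cancel₀ hx.ne' h)]
  rw [setLIntegral_congr_fun_ae measurableSet_Ioo (ae_of_all _
    (fun t (ht : t ∈ Set.Ioo (0:ℝ) 1) => show _ = ENNReal.ofReal (x ^ (α + γ - 1/p))
        * ENNReal.ofReal ((1-t)^(α-1) * t^(γ - 1/p)) from by
      have h1t : (0:ℝ) < 1 - t := by linarith [ht.2]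
      rw [← ENNReal.ofReal_mul (abs_nonneg _), ← ENNReal.ofReal_mul (by positivity)]
      congr 1
      rw [abs_of_pos hx, show x - x*t = x*(1-t) by ring, Real.mul_rpow hx.le h1t.le,
        Real.mul_rpow hx.le ht.1.le,
        show α + γ - 1/p = 1 + (α-1) + (γ-1/p) by ring, Real.rpow_add hx,
        Real.rpow_add hx, Real.rpow_one]
      ring))]
  rw [lintegral_const_mul' _ _ ENNReal.ofReal_ne_top, ← mul_assoc,
    ← ENNReal.ofReal_mul (by positivity), ← Real.rpow_add hx,
    show β + (α + γ - 1/p) = -(1/p) by linarith, ENNReal.ofReal_rpow_of_pos hx, mul_comm]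

open ENNReal in
private lemma schur_two {α β γ d b : ℝ} (hα : 0 < α) (hsum : α + β + γ = 0) (hb : 0 < b)
    (hd0 : 0 ≤ d) {y : ℝ} (hy : y ∈ Set.Ioo (0:ℝ) b) :
    ∫⁻ x in Set.Ioo (0:ℝ) b, (ENNReal.ofReal x) ^ (-d) *
        (Set.Ioo (0:ℝ) x).indicator
          (fun z => ENNReal.ofReal ((x - z) ^ (α-1) * (x ^ β * z ^ γ))) y
      ≤ (∫⁻ t in Set.Ioo (0:ℝ) 1, ENNReal.ofReal ((1-t)^(α-1) * t^(γ + d - 1)))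
        * (ENNReal.ofReal y) ^ (-d) := by
  have hy0 : (0:ℝ) < y := hy.1
  have hyb : (0:ℝ) < y / b := div_pos hy0 hb
  rw [setLIntegral_congr_fun_ae measurableSet_Ioo (ae_of_all _
    (fun x (hx : x ∈ Set.Ioo (0:ℝ) b) => show _ =
        (Set.Ioo y b).indicator
          (fun x => ENNReal.ofReal (x^(-d) * ((x - y)^(α-1) * (x^β * y^γ)))) x from by
      by_cases hxy : y < x
      · have hx0 : (0:ℝ) < x := hx.1
        have hxy2 : (0:ℝ) < x - y := sub_pos.mpr hxy
        rw [Set.indicator_of_mem (show y ∈ Set.Ioo (0:ℝ) x from ⟨hy0, hxy⟩),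
          Set.indicator_of_mem (show x ∈ Set.Ioo y b from ⟨hxy, hx.2⟩),
          ENNReal.ofReal_rpow_of_pos hx0, ← ENNReal.ofReal_mul (by positivity)]
      · rw [Set.indicator_of_notMem (show y ∉ Set.Ioo (0:ℝ) x from fun h => hxy h.2),
          Set.indicator_of_notMem (show x ∉ Set.Ioo y b from fun h => hxy h.1), mul_zero]))]
  rw [lintegral_indicator measurableSet_Ioo,
    Measure.restrict_restrict measurableSet_Ioo,
    Set.inter_eq_self_of_subset_left (Set.Ioo_subset_Ioo_left hy0.le)]
  have himg : (fun t => y * t⁻¹) '' Set.Ioo (y/b) 1 = Set.Ioo y b := by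
    ext z
    simp only [Set.mem_image, Set.mem_Ioo]
    constructor
    · rintro ⟨t, ⟨ht1, ht2⟩, rfl⟩
      have ht0 : 0 < t := lt_trans hyb ht1
      have hytb : y < t * b := by
        have := (div_lt_iff₀ hb).mp ht1; linarith
      constructor
      · rw [show y * t⁻¹ = y / t by ring, lt_div_iff₀ ht0]; nlinarith
      · rw [show y * t⁻¹ = y / t by ring, div_lt_iff₀ ht0]; linarith
    · rintro ⟨hz1, hz2⟩
      have hz0 : 0 < z := lt_trans hy0 hz1
      exact ⟨y / z, ⟨div_lt_div_of_pos_left hy0 hz0 hz2, (div_lt_one hz0).mpr hz1⟩,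
        by field_simp⟩
  rw [← himg, lintegral_image1d (f := fun t => y * t⁻¹) (f' := fun t => y * -((t:ℝ)^2)⁻¹)
    measurableSet_Ioo
    (fun t ht => (((hasDerivAt_inv (lt_trans hyb ht.1).ne').const_mul y).hasDerivWithinAt))
    (fun s _ t _ h => inv_injective (mul_left_cancel₀ hy0.ne' h))]
  rw [setLIntegral_congr_fun_ae measurableSet_Ioo (ae_of_all _
    (fun t (ht : t ∈ Set.Ioo (y/b) 1) => show _ =
        ENNReal.ofReal (y^(-d)) * ENNReal.ofReal ((1-t)^(α-1) * t^(γ + d - 1)) from by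
      have ht0 : (0:ℝ) < t := lt_trans hyb ht.1
      have h1t : (0:ℝ) < 1 - t := by have := ht.2; linarith
      have hinv : ∀ e : ℝ, (t⁻¹)^e = t^(-e) := fun e => by
        rw [Real.inv_rpow ht0.le, ← Real.rpow_neg ht0.le]
      rw [← ENNReal.ofReal_mul (abs_nonneg _), ← ENNReal.ofReal_mul (by positivity)]
      congr 1
      rw [show |y * -((t:ℝ)^2)⁻¹| = y * (t^2)⁻¹ from by
          rw [abs_mul, abs_of_pos hy0, abs_neg, abs_of_pos (by positivity)],
        show y * t⁻¹ - y = (y * (1-t)) * t⁻¹ from by field_simp,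
        show ((t:ℝ)^2)⁻¹ = t^((-2):ℝ) from by
          rw [← Real.rpow_natCast t 2, ← Real.rpow_neg ht0.le]; norm_num,
        show (y * (1-t) * t⁻¹) ^ (α-1) = y^(α-1) * (1-t)^(α-1) * t^(-(α-1)) from by
          rw [Real.mul_rpow (by positivity) (by positivity),
            Real.mul_rpow hy0.le h1t.le, hinv],
        show (y * t⁻¹)^(-d) = y^(-d) * t^(-(-d)) from by
          rw [Real.mul_rpow hy0.le (by positivity), hinv],
        show (y * t⁻¹)^β = y^β * t^(-β) from by
          rw [Real.mul_rpow hy0.le (by positivity), hinv]]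
      have merge_y : ∀ e1 e2 : ℝ, y ^ e1 * y ^ e2 = y ^ (e1 + e2) := fun e1 e2 =>
        (Real.rpow_add hy0 e1 e2).symm
      have merge_t : ∀ e1 e2 : ℝ, t ^ e1 * t ^ e2 = t ^ (e1 + e2) := fun e1 e2 =>
        (Real.rpow_add ht0 e1 e2).symm
      calc y * t^((-2):ℝ) * (y^(-d) * t^(-(-d)) * ((y^(α-1)*(1-t)^(α-1)*t^(-(α-1))) *
              (y^β * t^(-β) * y^γ)))
          = (y^(1:ℝ) * y^(-d) * y^(α-1) * y^β * y^γ) *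
              (t^((-2):ℝ) * t^(-(-d)) * t^(-(α-1)) * t^(-β)) * (1-t)^(α-1) := by
            rw [Real.rpow_one]; ring
        _ = y^(1 + -d + (α-1) + β + γ) * t^((-2) + -(-d) + -(α-1) + -β) * (1-t)^(α-1) := by
            rw [merge_y, merge_y, merge_y, merge_y, merge_t, merge_t, merge_t]
        _ = y^(-d) * ((1-t)^(α-1) * t^(γ + d - 1)) := by
            rw [show 1 + -d + (α-1) + β + γ = -d from by linarith,
              show (-2:ℝ) + -(-d) + -(α-1) + -β = γ + d - 1 from by linarith]
            ring))]
  rw [lintegral_const_mul' _ _ ENNReal.ofReal_ne_top]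
  rw [ENNReal.ofReal_rpow_of_pos hy0]
  rw [mul_comm]
  exact mul_le_mul_left (lintegral_mono_set (Set.Ioo_subset_Ioo_left hyb.le)) _

open ENNReal in
/-- For `p ≥ 1`, `b > 0`, `α > 0`, `α + β + γ = 0` and `(γ+1)p > 1`, the operator
`f ↦ (x ↦ x^β (I^α_{0+}(y ↦ y^γ f(y)))(x))` is bounded on `L^p([0,b])`. -/
theorem fracIntegral_left_weighted_bounded
    (p b α β γ : ℝ) (hp : 1 ≤ p) (hb : 0 < b) (hα : 0 < α)
    (hsum : α + β + γ = 0) (hγp : (γ + 1) * p > 1) :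
    ∃ C : ℝ, 0 < C ∧ ∀ f : ℝ → ℝ,
      MemLp f (ENNReal.ofReal p) (volume.restrict (Icc (0 : ℝ) b)) →
        MemLp (fun x => x ^ β * Iplus α (fun y => y ^ γ * f y) x)
          (ENNReal.ofReal p) (volume.restrict (Icc (0 : ℝ) b)) ∧
        eLpNorm (fun x => x ^ β * Iplus α (fun y => y ^ γ * f y) x)
            (ENNReal.ofReal p) (volume.restrict (Icc (0 : ℝ) b)) ≤
          ENNReal.ofReal C * eLpNorm f (ENNReal.ofReal p) (volume.restrict (Icc (0 : ℝ) b)) := by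
  classical
  have hp0 : (0:ℝ) < p := lt_of_lt_of_le one_pos hp
  have hΓ : 0 < Real.Gamma α := Real.Gamma_pos_of_pos hα
  set d : ℝ := 1 - 1/p with hdd
  have hp1le : 1/p ≤ 1 := by rw [div_le_one hp0]; linarith
  have hd0 : 0 ≤ d := by rw [hdd]; linarith
  have hc1 : (-1:ℝ) < γ - 1/p := by
    have h1p : 1/p < γ + 1 := by rw [div_lt_iff₀ hp0]; linarith
    linarith
  have hγd : γ + d - 1 = γ - 1/p := by rw [hdd]; ring
  set J : ℝ≥0∞ := ∫⁻ t in Set.Ioo (0:ℝ) 1, ENNReal.ofReal ((1-t)^(α-1) * t^(γ - 1/p)) with hJ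
  have hJtop : J < ⊤ := beta_lt_top hα hc1
  set cΓ : ℝ≥0∞ := ENNReal.ofReal (1/Real.Gamma α) with hcΓ
  set DD : ℝ≥0∞ := cΓ * (J ^ (p-1) * J) ^ (1/p) with hDD
  have hDDtop : DD ≠ ⊤ := by
    refine ENNReal.mul_ne_top ENNReal.ofReal_ne_top ?_
    exact (ENNReal.rpow_lt_top_of_nonneg (by positivity)
      (ENNReal.mul_ne_top (ENNReal.rpow_ne_top_of_nonneg (by linarith) hJtop.ne) hJtop.ne)).ne
  refine ⟨DD.toReal + 1, by positivity, fun f hf => ?_⟩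
  have hsm := hf.aestronglyMeasurable
  set g : ℝ → ℝ := hsm.mk f with hgdef
  have hgsm : StronglyMeasurable g := hsm.stronglyMeasurable_mk
  have hfg : f =ᵐ[volume.restrict (Icc (0:ℝ) b)] g := hsm.ae_eq_mk
  have hgm : Measurable g := hgsm.measurable
  -- a.e. equality of the two operators
  have hTae : (fun x => x ^ β * Iplus α (fun y => y ^ γ * f y) x)
      =ᵐ[volume.restrict (Icc (0:ℝ) b)]
      (fun x => x ^ β * Iplus α (fun y => y ^ γ * g y) x) := by
    have key : ∀ x ∈ Icc (0:ℝ) b,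
        Iplus α (fun y => y ^ γ * f y) x = Iplus α (fun y => y ^ γ * g y) x := by
      intro x hx
      unfold Iplus
      congr 1
      refine integral_congr_ae ?_
      have hsub : Ioo (0:ℝ) x ⊆ Icc (0:ℝ) b := fun y hy => ⟨hy.1.le, hy.2.le.trans hx.2⟩
      filter_upwards [ae_restrict_of_ae_restrict_of_subset hsub hfg] with y hy
      rw [hy]
    exact (ae_restrict_iff' measurableSet_Icc).mpr (Filter.Eventually.of_forall
      fun x hx => by simp only [key x hx])
  -- kernel
  set K : ℝ → ℝ → ℝ≥0∞ := fun x y => (Set.Ioo (0:ℝ) x).indicator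
    (fun z => ENNReal.ofReal ((x - z) ^ (α-1) * (x ^ β * z ^ γ))) y with hKdef
  have hKunc : Measurable (Function.uncurry K) := by
    have heq : Function.uncurry K
        = Set.indicator {q : ℝ × ℝ | 0 < q.2 ∧ q.2 < q.1}
          (fun q => ENNReal.ofReal ((q.1 - q.2)^(α-1) * (q.1^β * q.2^γ))) := by
      ext ⟨x, y⟩
      rw [Function.uncurry_apply_pair]
      simp only [hKdef]
      by_cases h : 0 < y ∧ y < x
      · rw [Set.indicator_of_mem (Set.mem_Ioo.mpr h),
          Set.indicator_of_mem (show (x,y) ∈ {q : ℝ×ℝ | 0 < q.2 ∧ q.2 < q.1} from h)]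
      · rw [Set.indicator_of_notMem (fun hh => h (Set.mem_Ioo.mp hh)),
          Set.indicator_of_notMem (show (x,y) ∉ {q : ℝ×ℝ | 0 < q.2 ∧ q.2 < q.1} from h)]
    rw [heq]
    refine Measurable.indicator (by fun_prop) ?_
    exact (measurableSet_lt measurable_const measurable_snd).inter
      (measurableSet_lt measurable_snd measurable_fst)
  set G : ℝ → ℝ≥0∞ := fun y => ENNReal.ofReal |g y| with hGdef
  have hGm : Measurable G := by fun_prop
  set U : ℝ → ℝ≥0∞ := fun x => ∫⁻ y, K x y * G y with hUdef
  set V : ℝ → ℝ≥0∞ := fun x => ∫⁻ y, K x y * G y ^ p * (ENNReal.ofReal y) ^ d with hVdef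
  -- pointwise domination
  have hptw : ∀ x ∈ Set.Ioo (0:ℝ) b,
      (‖x ^ β * Iplus α (fun y => y ^ γ * g y) x‖₊ : ℝ≥0∞) ≤ cΓ * U x := by
    intro x hx
    have hx0 : (0:ℝ) < x := hx.1
    have hxb : (0:ℝ) ≤ x ^ β := (Real.rpow_pos_of_pos hx0 β).le
    rw [← enorm_eq_nnnorm, Real.enorm_eq_ofReal_abs]
    unfold Iplus
    rw [abs_mul, abs_of_nonneg hxb, abs_mul,
      abs_of_nonneg (by positivity : (0:ℝ) ≤ 1/Real.Gamma α),
      ENNReal.ofReal_mul hxb, ENNReal.ofReal_mul (by positivity), mul_left_comm]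
    refine mul_le_mul_right ?_ _
    have h1 : ENNReal.ofReal |∫ y in Set.Ioo (0:ℝ) x, (x - y)^(α-1) * (y^γ * g y)|
        ≤ ∫⁻ y in Set.Ioo (0:ℝ) x, (‖(x - y)^(α-1) * (y^γ * g y)‖₊ : ℝ≥0∞) := by
      rw [← Real.enorm_eq_ofReal_abs]
      exact enorm_integral_le_lintegral_enorm _
    refine le_trans (mul_le_mul_right h1 _) ?_
    rw [← lintegral_const_mul' _ _ ENNReal.ofReal_ne_top]
    have h2 : ∀ᵐ y ∂volume, y ∈ Set.Ioo (0:ℝ) x →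
        ENNReal.ofReal (x^β) * (‖(x - y)^(α-1) * (y^γ * g y)‖₊ : ℝ≥0∞)
        = ENNReal.ofReal ((x - y)^(α-1) * (x^β * y^γ)) * ENNReal.ofReal |g y| := by
      refine ae_of_all _ fun y hy => ?_
      have hy0 : (0:ℝ) < y := hy.1
      have hxy : (0:ℝ) < x - y := sub_pos.mpr hy.2
      rw [← enorm_eq_nnnorm, Real.enorm_eq_ofReal_abs, abs_mul, abs_mul,
        abs_of_pos (Real.rpow_pos_of_pos hxy _), abs_of_pos (Real.rpow_pos_of_pos hy0 _),
        ← ENNReal.ofReal_mul hxb, ← ENNReal.ofReal_mul (by positivity)]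
      congr 1
      ring
    rw [setLIntegral_congr_fun_ae measurableSet_Ioo h2]
    refine le_of_eq ?_
    rw [hUdef, ← lintegral_indicator measurableSet_Ioo]
    refine lintegral_congr fun y => ?_
    simp only [hKdef]
    by_cases h : y ∈ Set.Ioo (0:ℝ) x
    · rw [Set.indicator_of_mem h, Set.indicator_of_mem h]
    · rw [Set.indicator_of_notMem h, Set.indicator_of_notMem h, zero_mul]
  -- Hölder step
  have hU : ∀ x ∈ Set.Ioo (0:ℝ) b, U x ^ p ≤ J ^ (p-1) *
      ((ENNReal.ofReal x) ^ (-d) * V x) := by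
    intro x hx
    have hKx : Measurable (K x) := hKunc.comp measurable_prodMk_left
    have hx0 : (0:ℝ) < x := hx.1
    have hS1 : ∫⁻ y, K x y * (ENNReal.ofReal y) ^ (-(1/p))
        = J * (ENNReal.ofReal x) ^ (-(1/p)) := schur_one hα hsum hp0 hx0
    have hUle : U x ≤ (J * (ENNReal.ofReal x) ^ (-(1/p))) ^ d * V x ^ (1/p) := by
      rcases eq_or_lt_of_le hp with hp1 | hp1
      · have hdz : d = 0 := by rw [hdd, ← hp1]; norm_num
        have hVU : V x = U x := by
          rw [hVdef, hUdef]
          refine lintegral_congr fun y => ?_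
          rw [hdz, ENNReal.rpow_zero, mul_one, ← hp1, ENNReal.rpow_one]
        rw [hdz, ENNReal.rpow_zero, one_mul, hVU, ← hp1]
        norm_num
      · set q0 : ℝ := p / (p-1) with hq0
        have hpq : p.HolderConjugate q0 := Real.HolderConjugate.conjExponent hp1
        have hq00 : 0 < q0 := hpq.symm.pos
        have hdq : d = 1/q0 := by rw [hdd, hq0]; field_simp
        set F1 : ℝ → ℝ≥0∞ := fun y => (K x y * (ENNReal.ofReal y) ^ (-(1/p))) ^ (1/q0)
          with hF1
        set F2 : ℝ → ℝ≥0∞ := fun y => (K x y * G y ^ p * (ENNReal.ofReal y) ^ d) ^ (1/p)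
          with hF2
        have hsplit : ∀ y, K x y * G y = F1 y * F2 y := by
          intro y
          by_cases hy : y ∈ Set.Ioo (0:ℝ) x
          · have hy0 : (0:ℝ) < y := hy.1
            have hxy : (0:ℝ) < x - y := sub_pos.mpr hy.2
            have hkval : K x y = ENNReal.ofReal ((x - y) ^ (α-1) * (x ^ β * y ^ γ)) := by
              rw [hKdef]; exact Set.indicator_of_mem hy _
            have hk0 : K x y ≠ 0 := by
              rw [hkval]; exact (ENNReal.ofReal_pos.mpr (by positivity)).ne'
            have hkt : K x y ≠ ⊤ := by rw [hkval]; exact ENNReal.ofReal_ne_top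
            have hw0 : (ENNReal.ofReal y) ≠ 0 := (ENNReal.ofReal_pos.mpr hy0).ne'
            have hwt : (ENNReal.ofReal y) ≠ ⊤ := ENNReal.ofReal_ne_top
            have hexp : F1 y * F2 y = (K x y ^ (1/q0) * K x y ^ (1/p)) *
                ((ENNReal.ofReal y) ^ (-(1/p) * (1/q0)) * (ENNReal.ofReal y) ^ (d * (1/p)))
                * G y := by
              simp only [hF1, hF2]
              rw [ENNReal.mul_rpow_of_nonneg _ _ (by positivity : (0:ℝ) ≤ 1/q0),
                ENNReal.mul_rpow_of_nonneg _ _ (by positivity : (0:ℝ) ≤ 1/p),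
                ENNReal.mul_rpow_of_nonneg _ _ (by positivity : (0:ℝ) ≤ 1/p),
                ← ENNReal.rpow_mul, ← ENNReal.rpow_mul, ← ENNReal.rpow_mul,
                mul_one_div_cancel hp0.ne', ENNReal.rpow_one]
              ring
            rw [hexp, ← ENNReal.rpow_add _ _ hk0 hkt, ← ENNReal.rpow_add _ _ hw0 hwt,
              show 1/q0 + 1/p = 1 from by
                rw [one_div, one_div, add_comm]; exact hpq.inv_add_inv_eq_one,
              show -(1/p) * (1/q0) + d * (1/p) = 0 from by rw [hdq]; ring,
              ENNReal.rpow_one, ENNReal.rpow_zero, mul_one]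
          · have hkz : K x y = 0 := by rw [hKdef]; exact Set.indicator_of_notMem hy _
            simp only [hF1, hF2, hkz, zero_mul]
            rw [ENNReal.zero_rpow_of_pos (by positivity : (0:ℝ) < 1/q0), zero_mul]
        have hF1m : AEMeasurable F1 volume := by
          refine Measurable.aemeasurable ?_
          rw [hF1]; fun_prop
        have hF2m : AEMeasurable F2 volume := by
          refine Measurable.aemeasurable ?_
          rw [hF2]; fun_prop
        calc U x = ∫⁻ y, F1 y * F2 y := by rw [hUdef]; exact lintegral_congr hsplit
          _ ≤ (∫⁻ y, F1 y ^ q0) ^ (1/q0) * (∫⁻ y, F2 y ^ p) ^ (1/p) :=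
              ENNReal.lintegral_mul_le_Lp_mul_Lq volume hpq.symm hF1m hF2m
          _ = (J * (ENNReal.ofReal x) ^ (-(1/p))) ^ d * V x ^ (1/p) := by
              have e1 : ∀ y, F1 y ^ q0 = K x y * (ENNReal.ofReal y) ^ (-(1/p)) := fun y => by
                rw [hF1, ← ENNReal.rpow_mul, one_div_mul_cancel hq00.ne', ENNReal.rpow_one]
              have e2 : ∀ y, F2 y ^ p = K x y * G y ^ p * (ENNReal.ofReal y) ^ d := fun y => by
                rw [hF2, ← ENNReal.rpow_mul, one_div_mul_cancel hp0.ne', ENNReal.rpow_one]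
              rw [lintegral_congr e1, lintegral_congr e2, hS1, hVdef, hdq]
    calc U x ^ p
        ≤ ((J * (ENNReal.ofReal x) ^ (-(1/p))) ^ d * V x ^ (1/p)) ^ p :=
          ENNReal.rpow_le_rpow hUle hp0.le
      _ = J ^ (p-1) * ((ENNReal.ofReal x) ^ (-d) * V x) := by
          rw [ENNReal.mul_rpow_of_nonneg _ _ hp0.le, ← ENNReal.rpow_mul, ← ENNReal.rpow_mul,
            one_div_mul_cancel hp0.ne', ENNReal.rpow_one,
            show d * p = p - 1 from by rw [hdd]; field_simp,
            ENNReal.mul_rpow_of_nonneg _ _ (by linarith : (0:ℝ) ≤ p - 1),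
            ← ENNReal.rpow_mul,
            show -(1/p) * (p-1) = -d from by rw [hdd]; field_simp,
            mul_assoc]
  -- main chain
  have hchain : ∫⁻ x in Set.Ioo (0:ℝ) b, U x ^ p
      ≤ J ^ (p-1) * (J * ∫⁻ y in Set.Ioo (0:ℝ) b, G y ^ p) := by
    have hinner2 : ∫⁻ x in Set.Ioo (0:ℝ) b, (ENNReal.ofReal x) ^ (-d) * V x
        ≤ J * ∫⁻ y in Set.Ioo (0:ℝ) b, G y ^ p := by
      have e1 : ∀ x ∈ Set.Ioo (0:ℝ) b,
          (ENNReal.ofReal x) ^ (-d) * V x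
          = ∫⁻ y, (G y ^ p * (ENNReal.ofReal y) ^ d) * ((ENNReal.ofReal x) ^ (-d) * K x y) := by
        intro x hx
        have hnt : (ENNReal.ofReal x) ^ (-d) ≠ ⊤ := by
          rw [ENNReal.ofReal_rpow_of_pos hx.1]; exact ENNReal.ofReal_ne_top
        rw [hVdef, ← lintegral_const_mul' _ _ hnt]
        exact lintegral_congr fun y => by ring
      rw [setLIntegral_congr_fun_ae measurableSet_Ioo (ae_of_all _ e1)]
      have hswap : ∫⁻ x in Set.Ioo (0:ℝ) b, ∫⁻ y,
            (G y ^ p * (ENNReal.ofReal y) ^ d) * ((ENNReal.ofReal x) ^ (-d) * K x y)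
          = ∫⁻ y, ∫⁻ x in Set.Ioo (0:ℝ) b,
            (G y ^ p * (ENNReal.ofReal y) ^ d) * ((ENNReal.ofReal x) ^ (-d) * K x y) := by
        refine lintegral_lintegral_swap ?_
        refine Measurable.aemeasurable ?_
        have heq2 : (Function.uncurry fun x y => (G y ^ p * (ENNReal.ofReal y) ^ d) *
            ((ENNReal.ofReal x) ^ (-d) * K x y)) = fun z : ℝ × ℝ =>
            (G z.2 ^ p * (ENNReal.ofReal z.2) ^ d) *
            ((ENNReal.ofReal z.1) ^ (-d) * Function.uncurry K z) := rfl
        rw [heq2]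
        fun_prop
      rw [hswap]
      have hinner : ∀ y, ∫⁻ x in Set.Ioo (0:ℝ) b,
          (G y ^ p * (ENNReal.ofReal y) ^ d) * ((ENNReal.ofReal x) ^ (-d) * K x y)
          ≤ (Set.Ioo (0:ℝ) b).indicator (fun y => J * G y ^ p) y := by
        intro y
        have hpull : ∫⁻ x in Set.Ioo (0:ℝ) b,
            (G y ^ p * (ENNReal.ofReal y) ^ d) * ((ENNReal.ofReal x) ^ (-d) * K x y)
            = (G y ^ p * (ENNReal.ofReal y) ^ d) *
              ∫⁻ x in Set.Ioo (0:ℝ) b, (ENNReal.ofReal x) ^ (-d) * K x y := by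
          refine lintegral_const_mul' _ _ ?_
          exact ENNReal.mul_ne_top
            (ENNReal.rpow_lt_top_of_nonneg hp0.le ENNReal.ofReal_ne_top).ne
            (ENNReal.rpow_lt_top_of_nonneg hd0 ENNReal.ofReal_ne_top).ne
        rw [hpull]
        by_cases hy : y ∈ Set.Ioo (0:ℝ) b
        · rw [Set.indicator_of_mem hy]
          have h2 := schur_two (α := α) (β := β) (γ := γ) hα hsum hb hd0 hy
          rw [hγd] at h2
          refine le_trans (mul_le_mul_right h2 _) (le_of_eq ?_)
          have hw0 : (ENNReal.ofReal y) ≠ 0 := (ENNReal.ofReal_pos.mpr hy.1).ne'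
          rw [show G y ^ p * (ENNReal.ofReal y) ^ d * (J * (ENNReal.ofReal y) ^ (-d))
              = J * G y ^ p * ((ENNReal.ofReal y) ^ d * (ENNReal.ofReal y) ^ (-d)) from by
                ring,
            ← ENNReal.rpow_add _ _ hw0 ENNReal.ofReal_ne_top, add_neg_cancel,
            ENNReal.rpow_zero, mul_one]
        · rw [Set.indicator_of_notMem hy]
          have hzero : ∫⁻ x in Set.Ioo (0:ℝ) b, (ENNReal.ofReal x) ^ (-d) * K x y = 0 := by
            have hz : ∀ᵐ x ∂volume, x ∈ Set.Ioo (0:ℝ) b →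
                (ENNReal.ofReal x) ^ (-d) * K x y = 0 := by
              refine ae_of_all _ fun x hx => ?_
              have hnot : y ∉ Set.Ioo (0:ℝ) x := fun hmem => hy ⟨hmem.1, lt_trans hmem.2 hx.2⟩
              rw [hKdef]
              simp only [Set.indicator_of_notMem hnot, mul_zero]
            rw [setLIntegral_congr_fun_ae measurableSet_Ioo hz]
            simp
          rw [hzero, mul_zero]
      calc ∫⁻ y, ∫⁻ x in Set.Ioo (0:ℝ) b,
            (G y ^ p * (ENNReal.ofReal y) ^ d) * ((ENNReal.ofReal x) ^ (-d) * K x y)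
          ≤ ∫⁻ y, (Set.Ioo (0:ℝ) b).indicator (fun y => J * G y ^ p) y :=
            lintegral_mono hinner
        _ = ∫⁻ y in Set.Ioo (0:ℝ) b, J * G y ^ p := lintegral_indicator measurableSet_Ioo _
        _ = J * ∫⁻ y in Set.Ioo (0:ℝ) b, G y ^ p := lintegral_const_mul' _ _ hJtop.ne
    calc ∫⁻ x in Set.Ioo (0:ℝ) b, U x ^ p
        ≤ ∫⁻ x in Set.Ioo (0:ℝ) b, J ^ (p-1) * ((ENNReal.ofReal x) ^ (-d) * V x) :=
          setLIntegral_mono' measurableSet_Ioo hU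
      _ = J ^ (p-1) * ∫⁻ x in Set.Ioo (0:ℝ) b, (ENNReal.ofReal x) ^ (-d) * V x :=
          lintegral_const_mul' _ _ (ENNReal.rpow_ne_top_of_nonneg (by linarith) hJtop.ne)
      _ ≤ J ^ (p-1) * (J * ∫⁻ y in Set.Ioo (0:ℝ) b, G y ^ p) :=
          mul_le_mul_right hinner2 _
  -- norm bookkeeping
  have hq'0 : (ENNReal.ofReal p) ≠ 0 := by
    simp only [ne_eq, ENNReal.ofReal_eq_zero, not_le]; linarith
  have hq't : (ENNReal.ofReal p) ≠ ⊤ := ENNReal.ofReal_ne_top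
  have htoReal : (ENNReal.ofReal p).toReal = p := ENNReal.toReal_ofReal (by linarith)
  have hrest : volume.restrict (Set.Ioo (0:ℝ) b) = volume.restrict (Set.Icc (0:ℝ) b) :=
    Measure.restrict_congr_set Ioo_ae_eq_Icc
  have hTgsm : AEStronglyMeasurable (fun x => x ^ β * Iplus α (fun y => y ^ γ * g y) x)
      (volume.restrict (Icc (0:ℝ) b)) := by
    have hind : ∀ x y : ℝ, (Ioo (0:ℝ) x).indicator (fun z => (x - z)^(α-1) * (z^γ * g z)) y
        = Set.indicator {q : ℝ×ℝ | 0 < q.2 ∧ q.2 < q.1}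
          (fun q => (q.1 - q.2)^(α-1) * (q.2^γ * g q.2)) (x, y) := by
      intro x y
      by_cases h : 0 < y ∧ y < x
      · rw [Set.indicator_of_mem (mem_Ioo.mpr h),
          Set.indicator_of_mem (show (x,y) ∈ {q : ℝ×ℝ | 0 < q.2 ∧ q.2 < q.1} from h)]
      · rw [Set.indicator_of_notMem (fun hh => h (mem_Ioo.mp hh)),
          Set.indicator_of_notMem (show (x,y) ∉ {q : ℝ×ℝ | 0 < q.2 ∧ q.2 < q.1} from h)]
    have hH : StronglyMeasurable (Set.indicator {q : ℝ×ℝ | 0 < q.2 ∧ q.2 < q.1}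
        (fun q => (q.1 - q.2)^(α-1) * (q.2^γ * g q.2))) := by
      refine (Measurable.indicator (by fun_prop) ?_).stronglyMeasurable
      exact (measurableSet_lt measurable_const measurable_snd).inter
        (measurableSet_lt measurable_snd measurable_fst)
    have hint : StronglyMeasurable fun x : ℝ =>
        ∫ y, (Ioo (0:ℝ) x).indicator (fun z => (x - z)^(α-1) * (z^γ * g z)) y := by
      simp_rw [hind]
      exact hH.integral_prod_right'
    have heq : (fun x => x ^ β * Iplus α (fun y => y ^ γ * g y) x)
        = fun x => x ^ β * ((1/Real.Gamma α)
          * ∫ y, (Ioo (0:ℝ) x).indicator (fun z => (x - z)^(α-1) * (z^γ * g z)) y) := by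
      funext x
      unfold Iplus
      rw [integral_indicator measurableSet_Ioo]
    rw [heq]
    exact (((by fun_prop : Measurable fun x : ℝ => x ^ β).stronglyMeasurable).mul
      (hint.const_mul _)).aestronglyMeasurable
  have hnormg : eLpNorm g (ENNReal.ofReal p) (volume.restrict (Icc (0:ℝ) b))
      = (∫⁻ y in Set.Ioo (0:ℝ) b, G y ^ p) ^ (1/p) := by
    rw [eLpNorm_eq_lintegral_rpow_enorm_toReal hq'0 hq't, htoReal, ← hrest]
    congr 1
    refine lintegral_congr fun y => ?_
    rw [hGdef]; rw [Real.enorm_eq_ofReal_abs]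
  have hnormT : eLpNorm (fun x => x ^ β * Iplus α (fun y => y ^ γ * g y) x)
        (ENNReal.ofReal p) (volume.restrict (Icc (0:ℝ) b))
      = (∫⁻ x in Set.Ioo (0:ℝ) b,
          (‖x ^ β * Iplus α (fun y => y ^ γ * g y) x‖₊ : ℝ≥0∞) ^ p) ^ (1/p) := by
    rw [eLpNorm_eq_lintegral_rpow_enorm_toReal hq'0 hq't, htoReal, ← hrest]
    rfl
  have hbound : eLpNorm (fun x => x ^ β * Iplus α (fun y => y ^ γ * g y) x)
        (ENNReal.ofReal p) (volume.restrict (Icc (0:ℝ) b))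
      ≤ DD * eLpNorm g (ENNReal.ofReal p) (volume.restrict (Icc (0:ℝ) b)) := by
    rw [hnormT, hnormg]
    have step1 : ∫⁻ x in Set.Ioo (0:ℝ) b,
        (‖x ^ β * Iplus α (fun y => y ^ γ * g y) x‖₊ : ℝ≥0∞) ^ p
        ≤ cΓ ^ p * (J ^ (p-1) * (J * ∫⁻ y in Set.Ioo (0:ℝ) b, G y ^ p)) := by
      calc ∫⁻ x in Set.Ioo (0:ℝ) b,
            (‖x ^ β * Iplus α (fun y => y ^ γ * g y) x‖₊ : ℝ≥0∞) ^ p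
          ≤ ∫⁻ x in Set.Ioo (0:ℝ) b, cΓ ^ p * U x ^ p := by
            refine setLIntegral_mono' measurableSet_Ioo fun x hx => ?_
            rw [← ENNReal.mul_rpow_of_nonneg _ _ hp0.le]
            exact ENNReal.rpow_le_rpow (hptw x hx) hp0.le
        _ = cΓ ^ p * ∫⁻ x in Set.Ioo (0:ℝ) b, U x ^ p := by
            rw [lintegral_const_mul' _ _ (by
              exact (ENNReal.rpow_lt_top_of_nonneg hp0.le ENNReal.ofReal_ne_top).ne)]
        _ ≤ cΓ ^ p * (J ^ (p-1) * (J * ∫⁻ y in Set.Ioo (0:ℝ) b, G y ^ p)) :=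
            mul_le_mul_right hchain _
    calc (∫⁻ x in Set.Ioo (0:ℝ) b,
            (‖x ^ β * Iplus α (fun y => y ^ γ * g y) x‖₊ : ℝ≥0∞) ^ p) ^ (1/p)
        ≤ (cΓ ^ p * (J ^ (p-1) * (J * ∫⁻ y in Set.Ioo (0:ℝ) b, G y ^ p))) ^ (1/p) :=
          ENNReal.rpow_le_rpow step1 (by positivity)
      _ = DD * (∫⁻ y in Set.Ioo (0:ℝ) b, G y ^ p) ^ (1/p) := by
          rw [show J ^ (p-1) * (J * ∫⁻ y in Set.Ioo (0:ℝ) b, G y ^ p)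
              = (J ^ (p-1) * J) * ∫⁻ y in Set.Ioo (0:ℝ) b, G y ^ p from by ring,
            ENNReal.mul_rpow_of_nonneg _ _ (by positivity : (0:ℝ) ≤ 1/p),
            ENNReal.mul_rpow_of_nonneg _ _ (by positivity : (0:ℝ) ≤ 1/p),
            ← ENNReal.rpow_mul, mul_one_div_cancel hp0.ne', ENNReal.rpow_one, hDD, mul_assoc]
  have hmem : MemLp (fun x => x ^ β * Iplus α (fun y => y ^ γ * g y) x)
      (ENNReal.ofReal p) (volume.restrict (Icc (0:ℝ) b)) := by
    refine ⟨hTgsm, lt_of_le_of_lt hbound ?_⟩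
    rw [eLpNorm_congr_ae hfg.symm]
    exact ENNReal.mul_lt_top hDDtop.lt_top hf.2
  refine ⟨hmem.ae_eq hTae.symm, ?_⟩
  rw [eLpNorm_congr_ae hTae, eLpNorm_congr_ae hfg]
  refine le_trans hbound (mul_le_mul_left ?_ _)
  calc DD = ENNReal.ofReal DD.toReal := (ENNReal.ofReal_toReal hDDtop).symm
    _ ≤ ENNReal.ofReal (DD.toReal + 1) := ENNReal.ofReal_le_ofReal (by linarith)

end
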